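/- Let H₁ and H₂ be Hilbert spaces over 𝕜 (𝕜 = ℝ or ℂ) with H₁ nontrivial, and let T : H₁ → H₂ be a bounded linear operator. If m_T is nonempty, then m_T is the unit sphere of some linear subspace of H₁; i.e., there exists a subspace M of H₁ such that m_T = {x ∈ M : ‖x‖ = 1}. -/

import Mathlib

open ContinuousLinearMap RCLike
open scoped InnerProductSpace

/-- The minimum norm of a bounded linear operator. -/
noncomputable def minNorm {𝕜 X Y : Type*} [RCLike 𝕜] [NormedAddCommGroup X]
    [NormedSpace 𝕜 X] [NormedAddCommGroup Y] [NormedSpace 𝕜 Y] (T : X →L[𝕜] Y) : ℝ :=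
  sInf {r : ℝ | ∃ x : X, ‖x‖ = 1 ∧ r = ‖T x‖}

lemma pos_inner_zero {𝕜 H : Type*} [RCLike 𝕜] [NormedAddCommGroup H]
    [InnerProductSpace 𝕜 H] [CompleteSpace H]
    {S : H →L[𝕜] H} (hS : S.IsPositive) {x : H}
    (hx : re (⟪S x, x⟫_𝕜) = 0) : S x = 0 := by
  set a := re (⟪S (S x), S x⟫_𝕜) with ha_def
  set b := ‖S x‖ ^ 2 with hb_def
  have hsym : ⟪S (S x), x⟫_𝕜 = ⟪S x, S x⟫_𝕜 := hS.1 (S x) x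
  have key : ∀ t : ℝ, 0 ≤ t ^ 2 * a + 2 * t * b := by
    intro t
    have h0 := hS.2 (x + (t : 𝕜) • S x)
    rw [reApplyInnerSelf_apply] at h0
    have expand : ⟪S (x + (t : 𝕜) • S x), x + (t : 𝕜) • S x⟫_𝕜
        = ⟪S x, x⟫_𝕜 + ((t : ℝ) : 𝕜) * ⟪S x, S x⟫_𝕜 + ((t : ℝ) : 𝕜) * ⟪S (S x), x⟫_𝕜
          + ((t ^ 2 : ℝ) : 𝕜) * ⟪S (S x), S x⟫_𝕜 := by
      simp only [map_add, map_smul, inner_add_left, inner_add_right, inner_smul_left,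
        inner_smul_right, conj_ofReal, RCLike.ofReal_pow]
      ring
    rw [expand, hsym] at h0
    simp only [map_add, re_ofReal_mul, hx] at h0
    have hre : re (⟪S x, S x⟫_𝕜) = b := by
      rw [hb_def, ← inner_self_eq_norm_sq (𝕜 := 𝕜)]
    rw [hre] at h0
    linarith
  have ha : 0 ≤ a := hS.2 (S x)
  have hb : 0 ≤ b := sq_nonneg _
  have hb0 : b = 0 := by
    rcases eq_or_lt_of_le ha with ha0 | ha0
    · have := key (-1); nlinarith
    · have := key (-(b / a))
      have h2 : (-(b / a)) ^ 2 * a + 2 * (-(b / a)) * b = -(b ^ 2 / a) := by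
        field_simp; ring
      rw [h2] at this
      have h3 : 0 ≤ -(b ^ 2 / a) * a := mul_nonneg this ha0.le
      have h4 : -(b ^ 2 / a) * a = -b ^ 2 := by field_simp
      nlinarith
  exact norm_eq_zero.mp ((pow_eq_zero_iff two_ne_zero).mp hb0)

theorem stmt_9 {𝕜 H₁ H₂ : Type*} [RCLike 𝕜]
    [NormedAddCommGroup H₁] [InnerProductSpace 𝕜 H₁] [CompleteSpace H₁] [Nontrivial H₁]
    [NormedAddCommGroup H₂] [InnerProductSpace 𝕜 H₂] [CompleteSpace H₂]
    (T : H₁ →L[𝕜] H₂)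
    (hne : {x : H₁ | ‖x‖ = 1 ∧ ‖T x‖ = minNorm T}.Nonempty) :
    ∃ M : Submodule 𝕜 H₁,
      {x : H₁ | ‖x‖ = 1 ∧ ‖T x‖ = minNorm T} = {x : H₁ | x ∈ M ∧ ‖x‖ = 1} := by
  obtain ⟨x₀, hx₀1, _⟩ := hne
  set m := minNorm T with hm_def
  have hbdd : BddBelow {r : ℝ | ∃ x : H₁, ‖x‖ = 1 ∧ r = ‖T x‖} :=
    ⟨0, by rintro r ⟨x, hx, rfl⟩; exact norm_nonneg _⟩
  have hm_le : ∀ x : H₁, ‖x‖ = 1 → m ≤ ‖T x‖ := fun x hx =>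
    csInf_le hbdd ⟨x, hx, rfl⟩
  have hm0 : 0 ≤ m :=
    le_csInf ⟨‖T x₀‖, x₀, hx₀1, rfl⟩ (by rintro r ⟨x, hx, rfl⟩; exact norm_nonneg _)
  have hkey : ∀ x : H₁, m * ‖x‖ ≤ ‖T x‖ := by
    intro x
    rcases eq_or_ne x 0 with rfl | hx
    · simp
    · have hnx : (0:ℝ) < ‖x‖ := norm_pos_iff.mpr hx
      have hu : ‖((‖x‖⁻¹ : ℝ) : 𝕜) • x‖ = 1 := by
        rw [norm_smul]
        simp [abs_of_nonneg (le_of_lt (inv_pos.mpr hnx)), inv_mul_cancel₀ hnx.ne']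
      have h1 := hm_le _ hu
      rw [map_smul, norm_smul] at h1
      simp only [norm_ofReal, abs_of_nonneg (le_of_lt (inv_pos.mpr hnx))] at h1
      calc m * ‖x‖ ≤ (‖x‖⁻¹ * ‖T x‖) * ‖x‖ := by nlinarith
        _ = ‖T x‖ := by field_simp
  set c : 𝕜 := ((m ^ 2 : ℝ) : 𝕜) with hc_def
  set S : H₁ →L[𝕜] H₁ := ContinuousLinearMap.adjoint T ∘L T - c • (1 : H₁ →L[𝕜] H₁)
    with hS_def
  have quad : ∀ x : H₁, re (⟪S x, x⟫_𝕜) = ‖T x‖ ^ 2 - m ^ 2 * ‖x‖ ^ 2 := by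
    intro x
    have hSx : S x = ContinuousLinearMap.adjoint T (T x) - c • x := by
      simp [hS_def]
    rw [hSx, inner_sub_left, adjoint_inner_left, inner_smul_left]
    simp only [map_sub, conj_ofReal, re_ofReal_mul, hc_def]
    rw [← inner_self_eq_norm_sq (𝕜 := 𝕜) (T x), ← inner_self_eq_norm_sq (𝕜 := 𝕜) x]
  have hpos : S.IsPositive := by
    constructor
    · rw [← ContinuousLinearMap.isSelfAdjoint_iff_isSymmetric]
      apply IsSelfAdjoint.sub
      · rw [ContinuousLinearMap.isSelfAdjoint_iff']
        simp
      · have hc : star c = c := by simp [hc_def, RCLike.star_def, conj_ofReal]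
        exact IsSelfAdjoint.smul hc (IsSelfAdjoint.one _)
    · intro x
      rw [reApplyInnerSelf_apply, quad x]
      nlinarith [hkey x, norm_nonneg (T x), norm_nonneg x, mul_nonneg hm0 (norm_nonneg x)]
  refine ⟨LinearMap.ker (S : H₁ →ₗ[𝕜] H₁), ?_⟩
  ext x
  simp only [Set.mem_setOf_eq]
  constructor
  · rintro ⟨hx1, hx2⟩
    refine ⟨?_, hx1⟩
    have hq : re (⟪S x, x⟫_𝕜) = 0 := by rw [quad x, hx1, ← hx2]; ring
    exact LinearMap.mem_ker.mpr (pos_inner_zero hpos hq)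
  · rintro ⟨hxm, hx1⟩
    refine ⟨hx1, ?_⟩
    have h0 : S x = 0 := hxm
    have hq : ‖T x‖ ^ 2 - m ^ 2 * ‖x‖ ^ 2 = 0 := by rw [← quad x, h0]; simp
    rw [hx1] at hq
    have hsq : ‖T x‖ ^ 2 = m ^ 2 := by nlinarith
    rw [← Real.sqrt_sq (norm_nonneg (T x)), hsq, Real.sqrt_sq hm0]
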